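/- Let A ∈ 𝒮ⁿ[k] be a Robinson matrix and let d ∈ 𝔻ᵏ satisfy the path condition for A. Then for every pair u,v ∈ [n], every (u,v)-upper-bound-walk W₁ and every (u,v)-lower-bound-walk W₂ satisfy β⁻(W₂)ᵀ d < β⁺(W₁)ᵀ d. -/

import Mathlib

/-- The standard unit vector `χ_t ∈ ℤᵏ` (as a function `ℕ → ℤ`, supported on index `t`). -/
def chi (t : ℕ) : ℕ → ℤ := fun i => if i = t then 1 else 0

/-- The dot product `bᵀ d = Σ_{i=1}^k b_i d_i`. -/
def dotProd (k : ℕ) (b : ℕ → ℤ) (d : ℕ → ℝ) : ℝ :=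
  ∑ i ∈ Finset.Icc 1 k, (b i : ℝ) * d i

/-- `A ∈ 𝒮ⁿ[k]`: a symmetric matrix with entries in `{0,…,k}`, diagonal `k`,
entries increasing towards the diagonal. -/
def IsRobinson (n k : ℕ) (a : Fin n → Fin n → ℕ) : Prop :=
  (∀ u v, a u v = a v u) ∧ (∀ u, a u u = k) ∧ (∀ u v, a u v ≤ k) ∧
    ∀ u v w : Fin n, u < v → v < w → a u w ≤ a u v ∧ a u w ≤ a v w

/-- `d ∈ 𝔻ᵏ`: threshold vectors with `d 1 > d 2 > ⋯ > d k > 0`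
(values outside `{1,…,k}` are irrelevant). -/
def IsThreshold (k : ℕ) (d : ℕ → ℝ) : Prop :=
  (∀ i, 1 ≤ i → i < k → d (i + 1) < d i) ∧ 0 < d k

/-- Uniform embedding: for all pairs `u,v` and all `t ≤ k`,
`a u v = t ↔ d_{t+1} < |f v − f u| ≤ d_t`, with conventions `d_0 = +∞`, `d_{k+1} = −∞`. -/
def IsUnifEmb (n k : ℕ) (a : Fin n → Fin n → ℕ) (d : ℕ → ℝ)
    (f : Fin n → ℝ) : Prop :=
  ∀ u v : Fin n, ∀ t : ℕ, t ≤ k →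
    (a u v = t ↔ (t = k ∨ d (t + 1) < |f v - f u|) ∧ (t = 0 ∨ |f v - f u| ≤ d t))

/-- The strict inequality system: for all `u < v` and all `t ≤ k`,
`a u v = t ↔ d_{t+1} < f v − f u < d_t`, with conventions `d_0 = +∞`, `d_{k+1} = 0`. -/
def SatisfiesStrict (n k : ℕ) (a : Fin n → Fin n → ℕ) (d : ℕ → ℝ)
    (f : Fin n → ℝ) : Prop :=
  ∀ u v : Fin n, u < v → ∀ t : ℕ, t ≤ k →
    (a u v = t ↔ ((if t = k then (0 : ℝ) else d (t + 1)) < f v - f u) ∧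
      (t = 0 ∨ f v - f u < d t))

/-- `β⁺(x,y)`: for `x < y`, `β⁺(x,y) = χ_{a x y}` (junk value `χ_0` when `a x y = 0`,
where it is undefined); for `x > y`, `β⁺(x,y) = −β⁻(y,x)`. -/
def betaP {n : ℕ} (k : ℕ) (a : Fin n → Fin n → ℕ) (x y : Fin n) : ℕ → ℤ :=
  if x < y then chi (a x y)
  else if y < x then (if a x y = k then 0 else -chi (a x y + 1))
  else 0

/-- `β⁻(x,y)`: for `x < y`, `β⁻(x,y) = χ_{a x y + 1}` if `a x y < k` and `0` if `a x y = k`;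
for `x > y`, `β⁻(x,y) = −β⁺(y,x)`. -/
def betaM {n : ℕ} (k : ℕ) (a : Fin n → Fin n → ℕ) (x y : Fin n) : ℕ → ℤ :=
  if x < y then (if a x y = k then 0 else chi (a x y + 1))
  else if y < x then -chi (a x y)
  else 0

/-- `β⁺(W) = Σ_i β⁺(w_{i−1}, w_i)` over the steps of the walk `W`. -/
def betaPWalk {n : ℕ} (k : ℕ) (a : Fin n → Fin n → ℕ) (w : List (Fin n)) : ℕ → ℤ :=
  ((w.zip w.tail).map fun p => betaP k a p.1 p.2).sum

/-- `β⁻(W) = Σ_i β⁻(w_{i−1}, w_i)` over the steps of the walk `W`. -/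
def betaMWalk {n : ℕ} (k : ℕ) (a : Fin n → Fin n → ℕ) (w : List (Fin n)) : ℕ → ℤ :=
  ((w.zip w.tail).map fun p => betaM k a p.1 p.2).sum

/-- A `(u,v)`-upper-bound-walk: a walk from `u` to `v` with consecutive entries distinct,
in which every increasing step is an edge (`a x y ≥ 1`). -/
def IsUBWalk {n : ℕ} (a : Fin n → Fin n → ℕ) (u v : Fin n) (w : List (Fin n)) : Prop :=
  w.head? = some u ∧ w.getLast? = some v ∧
    List.Chain' (fun x y => x ≠ y ∧ (x < y → 1 ≤ a x y)) w

/-- A `(u,v)`-lower-bound-walk: a walk from `u` to `v` with consecutive entries distinct,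
in which every decreasing step is an edge (`a x y ≥ 1`). -/
def IsLBWalk {n : ℕ} (a : Fin n → Fin n → ℕ) (u v : Fin n) (w : List (Fin n)) : Prop :=
  w.head? = some u ∧ w.getLast? = some v ∧
    List.Chain' (fun x y => x ≠ y ∧ (y < x → 1 ≤ a x y)) w

/-- An upper-bound-cycle: a `(u,u)`-upper-bound-walk of length `p ≥ 2` in which
`u = w_0 = w_p` is the only repeated vertex. -/
def IsUBCycle {n : ℕ} (a : Fin n → Fin n → ℕ) (w : List (Fin n)) : Prop :=
  ∃ u : Fin n, IsUBWalk a u u w ∧ 3 ≤ w.length ∧ w.dropLast.Nodup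

/-- The path condition for `A` and `d`: for all `u < v`, every `(u,v)`-upper-bound-path `W₁`
and every `(u,v)`-lower-bound-path `W₂` satisfy `β⁻(W₂)ᵀ d < β⁺(W₁)ᵀ d`. -/
def PathCondition (n k : ℕ) (a : Fin n → Fin n → ℕ) (d : ℕ → ℝ) : Prop :=
  ∀ u v : Fin n, u < v → ∀ w₁ w₂ : List (Fin n),
    IsUBWalk a u v w₁ → w₁.Nodup → IsLBWalk a u v w₂ → w₂.Nodup →
      dotProd k (betaMWalk k a w₂) d < dotProd k (betaPWalk k a w₁) d

/-- The prefix-sum partial order `⪯` on `ℤᵏ`. -/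
def Preceq (k : ℕ) (x y : ℕ → ℤ) : Prop :=
  ∀ t, 1 ≤ t → t ≤ k → ∑ i ∈ Finset.Icc 1 t, x i ≤ ∑ i ∈ Finset.Icc 1 t, y i
section Aux

namespace St7

variable {n k : ℕ}

/-- Generic step-sum over a walk. -/
def genSum {n : ℕ} (f : Fin n → Fin n → ℕ → ℤ) (w : List (Fin n)) : ℕ → ℤ :=
  ((w.zip w.tail).map fun p => f p.1 p.2).sum

lemma betaPWalk_eq (a : Fin n → Fin n → ℕ) (w : List (Fin n)) :
    betaPWalk k a w = genSum (betaP k a) w := rfl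

lemma betaMWalk_eq (a : Fin n → Fin n → ℕ) (w : List (Fin n)) :
    betaMWalk k a w = genSum (betaM k a) w := rfl

lemma genSum_nil (f : Fin n → Fin n → ℕ → ℤ) : genSum f ([] : List (Fin n)) = 0 := rfl

lemma genSum_single (f : Fin n → Fin n → ℕ → ℤ) (x : Fin n) : genSum f [x] = 0 := rfl

lemma genSum_cons₂ (f : Fin n → Fin n → ℕ → ℤ) (x y : Fin n) (l : List (Fin n)) :
    genSum f (x :: y :: l) = f x y + genSum f (y :: l) := by
  simp [genSum]

lemma genSum_append_single (f : Fin n → Fin n → ℕ → ℤ) :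
    ∀ (A : List (Fin n)) (z x : Fin n), A.getLast? = some z →
      genSum f (A ++ [x]) = genSum f A + f z x := by
  intro A
  induction A with
  | nil => intro z x h; simp at h
  | cons a A' ih =>
    intro z x h
    cases A' with
    | nil =>
      simp only [List.getLast?_singleton, Option.some.injEq] at h
      subst h
      simp [genSum_cons₂, genSum_single, genSum_nil]
    | cons b A'' =>
      have hz : (b :: A'').getLast? = some z := by
        rwa [List.getLast?_cons_cons] at h
      have := ih z x hz
      simp only [List.cons_append, genSum_cons₂] at this ⊢
      rw [this]
      abel

lemma genSum_reverse (f : Fin n → Fin n → ℕ → ℤ) :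
    ∀ (w : List (Fin n)), genSum f w.reverse = genSum (fun x y => f y x) w := by
  intro w
  induction w with
  | nil => simp [genSum_nil]
  | cons x l ih =>
    cases l with
    | nil => simp [genSum_single]
    | cons y t =>
      have hgl : (y :: t).reverse.getLast? = some y := by
        rw [List.getLast?_reverse]; rfl
      calc genSum f ((x :: y :: t).reverse)
          = genSum f ((y :: t).reverse ++ [x]) := by simp
        _ = genSum f ((y :: t).reverse) + f y x := genSum_append_single f _ y x hgl
        _ = genSum (fun x y => f y x) (y :: t) + f y x := by rw [ih]
        _ = genSum (fun x y => f y x) (x :: y :: t) := by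
            rw [genSum_cons₂]; abel

lemma genSum_split (f : Fin n → Fin n → ℕ → ℤ) :
    ∀ (P : List (Fin n)) (x : Fin n) (L : List (Fin n)),
      genSum f (P ++ x :: L) = genSum f (P ++ [x]) + genSum f (x :: L) := by
  intro P
  induction P with
  | nil => intro x L; simp [genSum_single]
  | cons p P' ih =>
    intro x L
    cases P' with
    | nil =>
      cases L with
      | nil => simp [genSum_single]
      | cons y L' => simp only [List.cons_append, List.nil_append, genSum_cons₂,
          genSum_single]; abel
    | cons q P'' =>
      have h1 := ih x L
      simp only [List.cons_append, genSum_cons₂] at *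
      rw [h1]; abel

lemma sum_map_neg {γ : Type*} (L : List γ) (g : γ → ℕ → ℤ) :
    (L.map fun c => -(g c)).sum = -((L.map g).sum) := by
  induction L with
  | nil => simp
  | cons c L ih => simp [ih]; abel

lemma genSum_neg (f : Fin n → Fin n → ℕ → ℤ) (w : List (Fin n)) :
    genSum (fun x y => -(f x y)) w = -genSum f w := by
  unfold genSum
  exact sum_map_neg _ _

lemma betaM_swap {a : Fin n → Fin n → ℕ} (hsym : ∀ u v, a u v = a v u) (x y : Fin n) :
    betaM k a y x = -(betaP k a x y) := by
  rcases lt_trichotomy x y with h | h | h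
  · simp [betaM, betaP, h, h.asymm, hsym y x]
  · subst h; simp [betaM, betaP, lt_irrefl]
  · simp only [betaM, betaP, h, h.asymm, if_true, if_false, hsym y x]
    split <;> simp

lemma betaP_swap {a : Fin n → Fin n → ℕ} (hsym : ∀ u v, a u v = a v u) (x y : Fin n) :
    betaP k a y x = -(betaM k a x y) := by
  rw [betaM_swap hsym y x, neg_neg]

lemma betaMWalk_reverse {a : Fin n → Fin n → ℕ} (hsym : ∀ u v, a u v = a v u)
    (w : List (Fin n)) : betaMWalk k a w.reverse = -(betaPWalk k a w) := by
  rw [betaMWalk_eq, betaPWalk_eq, genSum_reverse]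
  have : (fun x y => betaM k a y x) = fun x y => -(betaP k a x y) := by
    funext x y; exact betaM_swap hsym x y
  rw [this, genSum_neg]

lemma betaPWalk_reverse {a : Fin n → Fin n → ℕ} (hsym : ∀ u v, a u v = a v u)
    (w : List (Fin n)) : betaPWalk k a w.reverse = -(betaMWalk k a w) := by
  rw [betaMWalk_eq, betaPWalk_eq, genSum_reverse]
  have : (fun x y => betaP k a y x) = fun x y => -(betaM k a x y) := by
    funext x y; exact betaP_swap hsym x y
  rw [this, genSum_neg]

lemma dot_add (b₁ b₂ : ℕ → ℤ) (d : ℕ → ℝ) :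
    dotProd k (b₁ + b₂) d = dotProd k b₁ d + dotProd k b₂ d := by
  simp [dotProd, add_mul, Finset.sum_add_distrib]

lemma dot_neg (b : ℕ → ℤ) (d : ℕ → ℝ) : dotProd k (-b) d = -dotProd k b d := by
  simp [dotProd, Finset.sum_neg_distrib]

lemma walk_length_two {u v : Fin n} {w : List (Fin n)}
    (hh : w.head? = some u) (hl : w.getLast? = some v) (huv : u ≠ v) : 2 ≤ w.length := by
  match w with
  | [] => simp at hh
  | [x] =>
    simp only [List.head?_cons, Option.some.injEq] at hh
    simp only [List.getLast?_singleton, Option.some.injEq] at hl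
    exact absurd (hh.symm.trans hl) huv
  | x :: y :: t => simp

lemma rev_LB_of_UB {a : Fin n → Fin n → ℕ} (hsym : ∀ u v, a u v = a v u) {u v : Fin n}
    {w : List (Fin n)} (h : IsUBWalk a u v w) : IsLBWalk a v u w.reverse := by
  obtain ⟨hh, hl, hc⟩ := h
  refine ⟨by rwa [List.head?_reverse], by rwa [List.getLast?_reverse], ?_⟩
  rw [List.Chain', List.isChain_reverse]
  refine hc.imp ?_
  intro p q hpq
  exact ⟨hpq.1.symm, fun hlt => (hsym q p) ▸ hpq.2 hlt⟩

lemma rev_UB_of_LB {a : Fin n → Fin n → ℕ} (hsym : ∀ u v, a u v = a v u) {u v : Fin n}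
    {w : List (Fin n)} (h : IsLBWalk a u v w) : IsUBWalk a v u w.reverse := by
  obtain ⟨hh, hl, hc⟩ := h
  refine ⟨by rwa [List.head?_reverse], by rwa [List.getLast?_reverse], ?_⟩
  rw [List.Chain', List.isChain_reverse]
  refine hc.imp ?_
  intro p q hpq
  exact ⟨hpq.1.symm, fun hlt => (hsym q p) ▸ hpq.2 hlt⟩

lemma exists_splice {α : Type*} : ∀ (l : List α), ¬ l.Nodup →
    ∃ (x : α) (P M S : List α), l = P ++ x :: M ++ x :: S := by
  intro l
  induction l with
  | nil => intro h; simp at h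
  | cons b t ih =>
    intro h
    by_cases hb : b ∈ t
    · obtain ⟨s, t', rfl⟩ := List.append_of_mem hb
      exact ⟨b, [], s, t', by simp⟩
    · have ht : ¬ t.Nodup := fun hn => h (List.nodup_cons.2 ⟨hb, hn⟩)
      obtain ⟨x, P, M, S, rfl⟩ := ih ht
      exact ⟨x, b :: P, M, S, by simp⟩

end St7

end Aux

namespace St7

lemma genSum_splice {n : ℕ} (f : Fin n → Fin n → ℕ → ℤ) (P M S : List (Fin n)) (x y : Fin n) :
    genSum f (P ++ x :: (y :: M) ++ x :: S)
      = genSum f (P ++ x :: S) + genSum f (x :: y :: (M ++ [x])) := by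
  have h1 := genSum_split f P x ((y :: M) ++ x :: S)
  have h2 := genSum_split f (x :: y :: M) x S
  have h3 := genSum_split f P x S
  simp only [List.cons_append, List.append_assoc, List.nil_append] at h1 h2 h3 ⊢
  rw [h1, h2, h3]
  abel

lemma chain_splice {n : ℕ} {R : Fin n → Fin n → Prop} {P M S : List (Fin n)} {x : Fin n}
    (h : List.Chain' R (P ++ x :: M ++ x :: S)) :
    List.Chain' R (P ++ x :: S) ∧ List.Chain' R ((x :: M) ++ [x]) := by
  rw [show P ++ x :: M ++ x :: S = P ++ ((x :: M) ++ (x :: S)) by simp] at h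
  rw [List.Chain', List.isChain_append, List.isChain_append] at h
  obtain ⟨hP, ⟨hM, hS, hj2⟩, hj1⟩ := h
  constructor
  · rw [List.Chain', List.isChain_append]
    refine ⟨hP, hS, ?_⟩
    intro p hp q hq
    simp only [List.head?_cons, Option.mem_def, Option.some.injEq] at hq
    subst hq
    exact hj1 p hp x (by simp)
  · rw [List.Chain', List.isChain_append]
    refine ⟨hM, List.isChain_singleton x, ?_⟩
    intro p hp q hq
    simp only [List.head?_cons, Option.mem_def, Option.some.injEq] at hq
    subst hq
    exact hj2 p hp x (by simp)

lemma head?_append_cons {n : ℕ} (P L L' : List (Fin n)) (x : Fin n) :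
    (P ++ x :: L).head? = (P ++ x :: L').head? := by cases P <;> simp

lemma key {n k : ℕ} {a : Fin n → Fin n → ℕ} (hsym : ∀ u v, a u v = a v u)
    {d : ℕ → ℝ} (hpc : PathCondition n k a d) :
    ∀ m : ℕ, ∀ u v : Fin n, ∀ w₁ w₂ : List (Fin n),
      w₁.length + w₂.length = m → u ≠ v →
      IsUBWalk a u v w₁ → IsLBWalk a u v w₂ →
      dotProd k (betaMWalk k a w₂) d < dotProd k (betaPWalk k a w₁) d := by
  intro m
  induction m using Nat.strong_induction_on with
  | _ m IH =>
  have main : ∀ u v : Fin n, ∀ w₁ w₂ : List (Fin n),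
      w₁.length + w₂.length = m → u < v →
      IsUBWalk a u v w₁ → IsLBWalk a u v w₂ →
      dotProd k (betaMWalk k a w₂) d < dotProd k (betaPWalk k a w₁) d := by
    intro u v w₁ w₂ hm huv h₁ h₂
    by_cases hnd₁ : w₁.Nodup
    · by_cases hnd₂ : w₂.Nodup
      · exact hpc u v huv w₁ w₂ h₁ hnd₁ h₂ hnd₂
      · -- splice w₂ (the lower-bound walk)
        obtain ⟨x, P, M, S, hw⟩ := exists_splice w₂ hnd₂
        subst hw
        obtain ⟨hh, hl, hc⟩ := h₂
        obtain ⟨hch, hcyc⟩ := chain_splice hc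
        cases M with
        | nil =>
          exfalso
          have hxx := hcyc
          simp only [List.cons_append, List.nil_append] at hxx
          exact (List.isChain_pair.1 hxx).1 rfl
        | cons y M' =>
          have hcyc' : List.Chain' (fun p q => p ≠ q ∧ (q < p → 1 ≤ a p q))
              (x :: y :: (M' ++ [x])) := by
            rw [show x :: y :: (M' ++ [x]) = (x :: y :: M') ++ [x] by simp]
            exact hcyc
          have hxy := (List.isChain_cons_cons.1 hcyc').1
          have hW'chain := (List.isChain_cons_cons.1 hcyc').2
          have hW' : IsLBWalk a y x (y :: (M' ++ [x])) := by
            refine ⟨rfl, ?_, hW'chain⟩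
            rw [show y :: (M' ++ [x]) = (y :: M') ++ [x] by simp]
            exact List.getLast?_concat
          have hrev : IsUBWalk a x y (y :: (M' ++ [x])).reverse := rev_UB_of_LB hsym hW'
          have hLBxy : IsLBWalk a x y [x, y] := ⟨rfl, rfl, List.isChain_pair.2 hxy⟩
          have hw₁len : 2 ≤ w₁.length := walk_length_two h₁.1 h₁.2.1 huv.ne
          have hmlen : w₁.length + (P.length + M'.length + S.length + 3) = m := by
            simp only [List.length_append, List.length_cons] at hm
            omega
          have hmlt : (y :: (M' ++ [x])).reverse.length + [x, y].length < m := by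
            simp only [List.length_reverse, List.length_cons, List.length_append,
              List.length_nil]
            omega
          have hcyclt := IH _ hmlt x y (y :: (M' ++ [x])).reverse [x, y]
            rfl hxy.1 hrev hLBxy
          rw [betaPWalk_reverse hsym, dot_neg] at hcyclt
          have e2 : betaMWalk k a [x, y] = betaM k a x y := by
            rw [betaMWalk_eq, genSum_cons₂, genSum_single, add_zero]
          rw [e2] at hcyclt
          -- recursive call on spliced walk
          have hUB' : IsLBWalk a u v (P ++ x :: S) := by
            refine ⟨?_, ?_, hch⟩
            · rw [head?_append_cons P S (y :: (M' ++ x :: S)) x]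
              simp only [List.append_assoc, List.cons_append] at hh
              exact hh
            · rw [List.getLast?_append_cons]
              rw [show P ++ x :: (y :: M') ++ x :: S = (P ++ x :: (y :: M')) ++ x :: S
                by simp] at hl
              rw [List.getLast?_append_cons] at hl
              exact hl
          have hmlt2 : w₁.length + (P ++ x :: S).length < m := by
            simp only [List.length_append, List.length_cons]
            omega
          have hrec := IH _ hmlt2 u v w₁ (P ++ x :: S) rfl huv.ne h₁ hUB'
          have e1 : betaMWalk k a (P ++ x :: (y :: M') ++ x :: S)
              = betaMWalk k a (P ++ x :: S)
                + (betaM k a x y + betaMWalk k a (y :: (M' ++ [x]))) := by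
            rw [betaMWalk_eq, betaMWalk_eq, betaMWalk_eq, genSum_splice, genSum_cons₂]
          rw [e1, dot_add, dot_add]
          linarith
    · -- splice w₁ (the upper-bound walk)
      obtain ⟨x, P, M, S, hw⟩ := exists_splice w₁ hnd₁
      subst hw
      obtain ⟨hh, hl, hc⟩ := h₁
      obtain ⟨hch, hcyc⟩ := chain_splice hc
      cases M with
      | nil =>
        exfalso
        have hxx := hcyc
        simp only [List.cons_append, List.nil_append] at hxx
        exact (List.isChain_pair.1 hxx).1 rfl
      | cons y M' =>
        have hcyc' : List.Chain' (fun p q => p ≠ q ∧ (p < q → 1 ≤ a p q))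
            (x :: y :: (M' ++ [x])) := by
          rw [show x :: y :: (M' ++ [x]) = (x :: y :: M') ++ [x] by simp]
          exact hcyc
        have hxy := (List.isChain_cons_cons.1 hcyc').1
        have hW'chain := (List.isChain_cons_cons.1 hcyc').2
        have hW' : IsUBWalk a y x (y :: (M' ++ [x])) := by
          refine ⟨rfl, ?_, hW'chain⟩
          rw [show y :: (M' ++ [x]) = (y :: M') ++ [x] by simp]
          exact List.getLast?_concat
        have hrev : IsLBWalk a x y (y :: (M' ++ [x])).reverse := rev_LB_of_UB hsym hW'
        have hUBxy : IsUBWalk a x y [x, y] := ⟨rfl, rfl, List.isChain_pair.2 hxy⟩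
        have hw₂len : 2 ≤ w₂.length := walk_length_two h₂.1 h₂.2.1 huv.ne
        have hmlen : (P.length + M'.length + S.length + 3) + w₂.length = m := by
          simp only [List.length_append, List.length_cons] at hm
          omega
        have hmlt : [x, y].length + (y :: (M' ++ [x])).reverse.length < m := by
          simp only [List.length_reverse, List.length_cons, List.length_append,
            List.length_nil]
          omega
        have hcyclt := IH _ hmlt x y [x, y] (y :: (M' ++ [x])).reverse
          rfl hxy.1 hUBxy hrev
        rw [betaMWalk_reverse hsym, dot_neg] at hcyclt
        have e2 : betaPWalk k a [x, y] = betaP k a x y := by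
          rw [betaPWalk_eq, genSum_cons₂, genSum_single, add_zero]
        rw [e2] at hcyclt
        have hUB' : IsUBWalk a u v (P ++ x :: S) := by
          refine ⟨?_, ?_, hch⟩
          · rw [head?_append_cons P S (y :: (M' ++ x :: S)) x]
            simp only [List.append_assoc, List.cons_append] at hh
            exact hh
          · rw [List.getLast?_append_cons]
            rw [show P ++ x :: (y :: M') ++ x :: S = (P ++ x :: (y :: M')) ++ x :: S
              by simp] at hl
            rw [List.getLast?_append_cons] at hl
            exact hl
        have hmlt2 : (P ++ x :: S).length + w₂.length < m := by
          simp only [List.length_append, List.length_cons]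
          omega
        have hrec := IH _ hmlt2 u v (P ++ x :: S) w₂ rfl huv.ne hUB' h₂
        have e1 : betaPWalk k a (P ++ x :: (y :: M') ++ x :: S)
            = betaPWalk k a (P ++ x :: S)
              + (betaP k a x y + betaPWalk k a (y :: (M' ++ [x]))) := by
          rw [betaPWalk_eq, betaPWalk_eq, betaPWalk_eq, genSum_splice, genSum_cons₂]
        rw [e1, dot_add, dot_add]
        linarith
  intro u v w₁ w₂ hm huv h₁ h₂
  rcases lt_or_gt_of_ne huv with h | h
  · exact main u v w₁ w₂ hm h h₁ h₂
  · have h₂' := rev_UB_of_LB hsym h₂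
    have h₁' := rev_LB_of_UB hsym h₁
    have hm' : w₂.reverse.length + w₁.reverse.length = m := by
      simp only [List.length_reverse]; omega
    have hfin := main v u w₂.reverse w₁.reverse hm' h h₂' h₁'
    rw [betaMWalk_reverse hsym, betaPWalk_reverse hsym, dot_neg, dot_neg] at hfin
    linarith

end St7

/-- Corollary 1: if `d ∈ 𝔻ᵏ` satisfies the path condition for `A`, then
for every pair `u ≠ v`, every `(u,v)`-upper-bound-walk `W₁` and every
`(u,v)`-lower-bound-walk `W₂` satisfy `β⁻(W₂)ᵀ d < β⁺(W₁)ᵀ d`. -/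
theorem statement7 (n k : ℕ) (hn : 1 ≤ n) (hk : 1 ≤ k) (a : Fin n → Fin n → ℕ)
    (hA : IsRobinson n k a) (d : ℕ → ℝ) (hd : IsThreshold k d)
    (hpc : PathCondition n k a d) (u v : Fin n) (huv : u ≠ v)
    (w₁ w₂ : List (Fin n)) (h₁ : IsUBWalk a u v w₁) (h₂ : IsLBWalk a u v w₂) :
    dotProd k (betaMWalk k a w₂) d < dotProd k (betaPWalk k a w₁) d := by
  exact St7.key hA.1 hpc (w₁.length + w₂.length) u v w₁ w₂ rfl huv h₁ h₂
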